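/- Let n ≥ 1 and let 𝔮, q1, q3, x be invertible elements of a commutative ring satisfying 𝔮² q1 q3 = 1. Then for all Young diagrams λ, μ: N_{λμ}(𝔮^{−1}x; q1, q3) = ∏_{s∈λ, h_{μ,λ}(s)≡0 (mod n)} (−𝔮^{−1} q1^{a_λ(s)} q3^{−ℓ_μ(s)−1} x) · ∏_{t∈μ, h_{λ,μ}(t)≡0 (mod n)} (−𝔮^{−1} q1^{−a_μ(t)−1} q3^{ℓ_λ(t)} x) · N_{μλ}(𝔮^{−1}x^{−1}; q1, q3). -/

import Mathlib

open Finset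

/-- Arm length of the (0-based) box `c` with respect to `μ` (may be negative). -/
def armZ (μ : YoungDiagram) (c : ℕ × ℕ) : ℤ := (μ.rowLen c.1 : ℤ) - c.2 - 1

/-- Leg length of the (0-based) box `c` with respect to `μ` (may be negative). -/
def legZ (μ : YoungDiagram) (c : ℕ × ℕ) : ℤ := (μ.colLen c.2 : ℤ) - c.1 - 1

/-- Relative hook length `h_{λ,μ}(s) = a_μ(s) + ℓ_λ(s) + 1`. -/
def relHook (lam mu : YoungDiagram) (c : ℕ × ℕ) : ℤ := armZ mu c + legZ lam c + 1

/-- The bifundamental Nekrasov factor on `ALE_n × S¹`. -/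
def nek {R : Type*} [CommRing R] (n : ℕ) (q1 q3 z : Rˣ) (lam mu : YoungDiagram) : R :=
  (∏ s ∈ lam.cells.filter (fun s => ((relHook mu lam s : ZMod n) = 0)),
    (1 - ((z * q1 ^ armZ lam s * q3 ^ (-legZ mu s - 1) : Rˣ) : R))) *
  (∏ t ∈ mu.cells.filter (fun t => ((relHook lam mu t : ZMod n) = 0)),
    (1 - ((z * q1 ^ (-armZ mu t - 1) * q3 ^ legZ lam t : Rˣ) : R)))

private theorem unit_cancel' {R : Type*} [CommRing R] (qq q1 q3 x : Rˣ)
    (hq : qq ^ 2 * q1 * q3 = 1) (a b : ℤ) :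
    (qq⁻¹ * x * q1^a * q3^b) * (qq⁻¹ * x⁻¹ * q1^(-a-1) * q3^(-b-1)) = 1 := by
  have e1 : ∀ (u : Rˣ) (c : ℤ), u^c * u^(-c-1) = u⁻¹ := by
    intro u c
    rw [← zpow_add, show c + (-c-1) = -1 by ring, zpow_neg_one]
  have hc : (qq⁻¹ * x * q1^a * q3^b) * (qq⁻¹ * x⁻¹ * q1^(-a-1) * q3^(-b-1))
      = (qq⁻¹*qq⁻¹) * (x*x⁻¹) * (q1^a*q1^(-a-1)) * (q3^b*q3^(-b-1)) := by
    simp only [mul_comm, mul_left_comm, mul_assoc]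
  have h2 : qq⁻¹*qq⁻¹*q1⁻¹*q3⁻¹ = (qq^2*q1*q3)⁻¹ := by
    rw [mul_inv_rev, mul_inv_rev, pow_two, mul_inv_rev]
    simp only [mul_comm, mul_left_comm, mul_assoc]
  rw [hc, e1, e1, mul_inv_cancel, mul_one, h2, hq, inv_one]

private theorem step' {R : Type*} [CommRing R] (qq q1 q3 x : Rˣ)
    (hq : qq ^ 2 * q1 * q3 = 1) (a b a' b' : ℤ) (ha : a' = -a-1) (hb : b' = -b-1) :
    (1 : R) - ((qq⁻¹ * x * q1^a * q3^b : Rˣ) : R)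
    = (-((qq⁻¹ * q1^a * q3^b * x : Rˣ) : R)) *
      (1 - ((qq⁻¹ * x⁻¹ * q1^a' * q3^b' : Rˣ) : R)) := by
  subst ha hb
  have h := unit_cancel' qq q1 q3 x hq a b
  have h' : ((qq⁻¹*x*q1^a*q3^b : Rˣ):R) * ((qq⁻¹*x⁻¹*q1^(-a-1)*q3^(-b-1) : Rˣ):R) = 1 := by
    rw [← Units.val_mul, h, Units.val_one]
  have hw : (qq⁻¹ * q1^a * q3^b * x : Rˣ) = qq⁻¹ * x * q1^a * q3^b := by
    simp only [mul_comm, mul_left_comm, mul_assoc]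
  rw [hw]
  linear_combination -h'

/-- Symmetry of the Nekrasov factor on the ALE space (combinatorial core of Lemma 6):
`N_{λμ}(𝔮⁻¹x) = ∏_{s∈λ,h_{μ,λ}(s)≡0} (-𝔮⁻¹ q1^{a_λ(s)} q3^{-ℓ_μ(s)-1} x) ·
 ∏_{t∈μ,h_{λ,μ}(t)≡0} (-𝔮⁻¹ q1^{-a_μ(t)-1} q3^{ℓ_λ(t)} x) · N_{μλ}(𝔮⁻¹x⁻¹)`,
under the constraint `𝔮² q1 q3 = 1`. -/
theorem nek_symmetry {R : Type*} [CommRing R] (n : ℕ) (hn : 1 ≤ n)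
    (qq q1 q3 x : Rˣ) (hq : qq ^ 2 * q1 * q3 = 1) (lam mu : YoungDiagram) :
    nek n q1 q3 (qq⁻¹ * x) lam mu
    = (∏ s ∈ lam.cells.filter (fun s => ((relHook mu lam s : ZMod n) = 0)),
        (-((qq⁻¹ * q1 ^ armZ lam s * q3 ^ (-legZ mu s - 1) * x : Rˣ) : R))) *
      (∏ t ∈ mu.cells.filter (fun t => ((relHook lam mu t : ZMod n) = 0)),
        (-((qq⁻¹ * q1 ^ (-armZ mu t - 1) * q3 ^ legZ lam t * x : Rˣ) : R))) *
      nek n q1 q3 (qq⁻¹ * x⁻¹) mu lam := by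
  simp only [nek]
  have L1 : (∏ s ∈ lam.cells.filter (fun s => ((relHook mu lam s : ZMod n) = 0)),
        ((1:R) - ((qq⁻¹ * x * q1 ^ armZ lam s * q3 ^ (-legZ mu s - 1) : Rˣ) : R)))
      = (∏ s ∈ lam.cells.filter (fun s => ((relHook mu lam s : ZMod n) = 0)),
          (-((qq⁻¹ * q1 ^ armZ lam s * q3 ^ (-legZ mu s - 1) * x : Rˣ) : R))) *
        (∏ s ∈ lam.cells.filter (fun s => ((relHook mu lam s : ZMod n) = 0)),
          ((1:R) - ((qq⁻¹ * x⁻¹ * q1 ^ (-armZ lam s - 1) * q3 ^ legZ mu s : Rˣ) : R))) := by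
    rw [← Finset.prod_mul_distrib]
    exact Finset.prod_congr rfl fun s _ => step' qq q1 q3 x hq _ _ _ _ (by ring) (by ring)
  have L2 : (∏ t ∈ mu.cells.filter (fun t => ((relHook lam mu t : ZMod n) = 0)),
        ((1:R) - ((qq⁻¹ * x * q1 ^ (-armZ mu t - 1) * q3 ^ legZ lam t : Rˣ) : R)))
      = (∏ t ∈ mu.cells.filter (fun t => ((relHook lam mu t : ZMod n) = 0)),
          (-((qq⁻¹ * q1 ^ (-armZ mu t - 1) * q3 ^ legZ lam t * x : Rˣ) : R))) *
        (∏ t ∈ mu.cells.filter (fun t => ((relHook lam mu t : ZMod n) = 0)),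
          ((1:R) - ((qq⁻¹ * x⁻¹ * q1 ^ armZ mu t * q3 ^ (-legZ lam t - 1) : Rˣ) : R))) := by
    rw [← Finset.prod_mul_distrib]
    exact Finset.prod_congr rfl fun t _ => step' qq q1 q3 x hq _ _ _ _ (by ring) (by ring)
  rw [L1, L2]
  ring
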